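/- Let s be an (α,k)-equilibrium of a polymatrix coordination game with individual preferences, let s* be any joint strategy, and let K = {i_1,…,i_k} be any coalition of size k. Then there is an ordering of K such that for every x ∈ {1,…,k}, q^{i_x}(s*_{i_x}) + Σ_{j ∈ N_{i_x} ∩ {i_1,…,i_x}} q^{i_x j}(s*) ≤ α·p_{i_x}(s). In particular, Σ_{i∈K} ( q^i(s*) + (1/2)·Σ_{j∈N_i∩K} q^{ij}(s*) ) ≤ α·Σ_{i∈K} p_i(s). -/

import Mathlib

open Finset

/-- If `s` is an `(α,k)`-equilibrium of a polymatrix coordination game with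
individual preferences, `s*` is any joint strategy and `K = {i₁,…,i_k}` is any coalition of
size `k`, then `K` can be ordered so that for every `x`,
`q^{i_x}(s*) + Σ_{j ∈ N_{i_x} ∩ {i₁,…,i_x}} q^{i_x j}(s*) ≤ α·p_{i_x}(s)`; in particular
`Σ_{i∈K} ( q^i(s*) + ½ Σ_{j∈N_i∩K} q^{ij}(s*) ) ≤ α·Σ_{i∈K} p_i(s)`. -/
theorem ordering_lemma_for_equilibrium
    {N : Type*} [Fintype N] [DecidableEq N]
    (S : N → Type*) [∀ i, Fintype (S i)]
    (E : N → N → Prop) [∀ i j, Decidable (E i j)]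
    (hE_symm : ∀ i j, E i j ↔ E j i) (hE_irrefl : ∀ i, ¬ E i i)
    (q : ∀ i, S i → ℝ) (hq : ∀ i x, 0 ≤ q i x)
    (Q : ∀ i j, S i → S j → ℝ)
    (hQ_nonneg : ∀ i j x y, 0 ≤ Q i j x y)
    (hQ_symm : ∀ i j x y, Q i j x y = Q j i y x)
    (p : (∀ i, S i) → N → ℝ)
    (hp : ∀ s i, p s i = q i (s i) + ∑ j ∈ univ.filter (fun j => E i j), Q i j (s i) (s j))
    (α : ℝ) (hα : 1 ≤ α) (k : ℕ) (hk : 1 ≤ k)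
    (s : ∀ i, S i)
    -- `s` is an `(α,k)`-equilibrium:
    (heq : ∀ K : Finset N, K.Nonempty → K.card ≤ k → ∀ s' : ∀ i, S i,
      (∀ i ∉ K, s' i = s i) → ∃ i ∈ K, p s' i ≤ α * p s i)
    (sStar : ∀ i, S i)
    (K : Finset N) (hK : K.card = k) :
    (∃ f : Fin k → N, Function.Injective f ∧ (image f univ = K) ∧
      ∀ x : Fin k,
        q (f x) (sStar (f x)) +
          ∑ j ∈ univ.filter (fun j => E (f x) j ∧ ∃ y : Fin k, y ≤ x ∧ f y = j),
            Q (f x) j (sStar (f x)) (sStar j)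
        ≤ α * p s (f x)) ∧
    (∑ i ∈ K, (q i (sStar i) +
        (1 / 2) * ∑ j ∈ univ.filter (fun j => E i j ∧ j ∈ K), Q i j (sStar i) (sStar j))
      ≤ α * ∑ i ∈ K, p s i) := by
  classical
  have hKne : K.Nonempty := by rw [← card_pos, hK]; omega
  obtain ⟨i0, hi0⟩ := hKne
  -- Key lemma: from any nonempty subcoalition we can extract a "good" player.
  have key : ∀ A : Finset N, A ⊆ K → A.Nonempty → ∃ i, i ∈ A ∧
      q i (sStar i) + ∑ j ∈ univ.filter (fun j => E i j ∧ j ∈ A),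
        Q i j (sStar i) (sStar j) ≤ α * p s i := by
    intro A hAK hAne
    set s' : ∀ i, S i := fun i => if i ∈ A then sStar i else s i with hs'
    obtain ⟨i, hiA, hle⟩ := heq A hAne (hK ▸ card_le_card hAK) s'
      (fun i hi => by simp only [hs', if_neg hi])
    refine ⟨i, hiA, le_trans ?_ hle⟩
    rw [hp]
    have h1 : s' i = sStar i := by simp only [hs', if_pos hiA]
    rw [h1]
    have h2 : ∑ j ∈ univ.filter (fun j => E i j ∧ j ∈ A), Q i j (sStar i) (sStar j)
        = ∑ j ∈ univ.filter (fun j => E i j ∧ j ∈ A), Q i j (sStar i) (s' j) := by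
      refine sum_congr rfl (fun j hj => ?_)
      simp only [mem_filter, mem_univ, true_and] at hj
      simp only [hs', if_pos hj.2]
    have h3 : ∑ j ∈ univ.filter (fun j => E i j ∧ j ∈ A), Q i j (sStar i) (s' j)
        ≤ ∑ j ∈ univ.filter (fun j => E i j), Q i j (sStar i) (s' j) := by
      refine sum_le_sum_of_subset_of_nonneg ?_ (fun j _ _ => hQ_nonneg _ _ _ _)
      intro j hj
      simp only [mem_filter, mem_univ, true_and] at hj ⊢
      exact hj.1
    linarith
  -- Turn the key lemma into a choice function.
  have key' : ∀ A : Finset N, ∃ i, (A ⊆ K → A.Nonempty → i ∈ A ∧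
      q i (sStar i) + ∑ j ∈ univ.filter (fun j => E i j ∧ j ∈ A),
        Q i j (sStar i) (sStar j) ≤ α * p s i) := by
    intro A
    by_cases h : A ⊆ K ∧ A.Nonempty
    · obtain ⟨i, hi, hb⟩ := key A h.1 h.2
      exact ⟨i, fun _ _ => ⟨hi, hb⟩⟩
    · exact ⟨i0, fun h1 h2 => absurd ⟨h1, h2⟩ h⟩
  choose pick hpick using key'
  -- Build the decreasing chain of coalitions and the ordering.
  set Ach : ℕ → Finset N := fun m => Nat.rec K (fun _ B => B \ {pick B}) m with hAchdef
  have hAchS : ∀ m, Ach (m+1) = Ach m \ {pick (Ach m)} := fun m => rfl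
  set g : ℕ → N := fun m => pick (Ach m) with hgdef
  have hsub : ∀ m, Ach m ⊆ K := by
    intro m
    induction m with
    | zero => exact subset_rfl
    | succ m ih => rw [hAchS]; exact (sdiff_subset).trans ih
  have hcard : ∀ m, m ≤ k → (Ach m).card = k - m := by
    intro m
    induction m with
    | zero => intro _; rw [show Ach 0 = K from rfl]; simpa using hK
    | succ m ih =>
      intro h
      have hm := ih (by omega)
      have hne : (Ach m).Nonempty := card_pos.mp (by omega)
      have hmem : g m ∈ Ach m := (hpick (Ach m) (hsub m) hne).1
      rw [hAchS, Finset.sdiff_singleton_eq_erase, Finset.card_erase_of_mem hmem, hm]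
      omega
  have hne : ∀ m, m < k → (Ach m).Nonempty := by
    intro m hm
    have := hcard m (le_of_lt hm)
    exact card_pos.mp (by omega)
  have hmem : ∀ m, m < k → g m ∈ Ach m := fun m hm => (hpick (Ach m) (hsub m) (hne m hm)).1
  have hbound : ∀ m, m < k →
      q (g m) (sStar (g m)) + ∑ j ∈ univ.filter (fun j => E (g m) j ∧ j ∈ Ach m),
        Q (g m) j (sStar (g m)) (sStar j) ≤ α * p s (g m) :=
    fun m hm => (hpick (Ach m) (hsub m) (hne m hm)).2
  -- Characterisation of the chain.
  have hchar : ∀ m j, j ∈ Ach m ↔ j ∈ K ∧ ∀ t, t < m → g t ≠ j := by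
    intro m
    induction m with
    | zero => intro j; rw [show Ach 0 = K from rfl]; simp
    | succ m ih =>
      intro j
      rw [hAchS, mem_sdiff, ih j, mem_singleton]
      constructor
      · rintro ⟨⟨hjK, hall⟩, hne'⟩
        refine ⟨hjK, fun t ht => ?_⟩
        rcases Nat.lt_succ_iff_lt_or_eq.mp ht with h | h
        · exact hall t h
        · subst h; exact fun hc => hne' hc.symm
      · rintro ⟨hjK, hall⟩
        exact ⟨⟨hjK, fun t ht => hall t (by omega)⟩,
          fun hc => hall m (by omega) hc.symm⟩
  have ginj : ∀ m m', m < m' → m' < k → g m ≠ g m' := by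
    intro m m' hlt hk' hc
    exact ((hchar m' (g m')).mp (hmem m' hk')).2 m hlt hc
  set f : Fin k → N := fun x => g (k - 1 - x.val) with hfdef
  have hfval : ∀ x : Fin k, f x = g (k - 1 - x.val) := fun x => rfl
  have hfinj : Function.Injective f := by
    intro x y hxy
    have hx := x.isLt
    have hy := y.isLt
    rw [hfval, hfval] at hxy
    have : k - 1 - x.val = k - 1 - y.val := by
      by_contra hne'
      rcases Nat.lt_or_ge (k - 1 - x.val) (k - 1 - y.val) with h | h
      · exact ginj _ _ h (by omega) hxy
      · exact ginj _ _ (by omega) (by omega) hxy.symm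
    exact Fin.ext (by omega)
  have himg : image f univ = K := by
    apply Finset.eq_of_subset_of_card_le
    · intro j hj
      simp only [mem_image, mem_univ, true_and] at hj
      obtain ⟨x, hx⟩ := hj
      rw [← hx, hfval]
      exact hsub _ (hmem _ (by have := x.isLt; omega))
    · rw [hK, card_image_of_injective _ hfinj, card_univ, Fintype.card_fin]
  have hmemK_iff : ∀ j, j ∈ K ↔ ∃ x : Fin k, f x = j := by
    intro j
    rw [← himg]
    simp
  -- The filter in the statement coincides with the chain set.
  have hfilter : ∀ x : Fin k,
      univ.filter (fun j => E (f x) j ∧ ∃ y : Fin k, y ≤ x ∧ f y = j)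
        = univ.filter (fun j => E (g (k - 1 - x.val)) j ∧ j ∈ Ach (k - 1 - x.val)) := by
    intro x
    have hx := x.isLt
    ext j
    simp only [mem_filter, mem_univ, true_and]
    constructor
    · rintro ⟨hE, y, hyx, hfy⟩
      have hy := y.isLt
      have hfy' : g (k - 1 - y.val) = j := hfy
      have hyx' : y.val ≤ x.val := hyx
      refine ⟨hE, (hchar _ j).mpr ⟨?_, ?_⟩⟩
      · rw [← hfy']
        exact hsub _ (hmem _ (by omega))
      · intro t ht hc
        exact ginj t (k - 1 - y.val) (by omega) (by omega) (hc.trans hfy'.symm)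
    · rintro ⟨hE, hj⟩
      obtain ⟨hjK, hall⟩ := (hchar _ j).mp hj
      obtain ⟨y, hfy⟩ := (hmemK_iff j).mp hjK
      have hy := y.isLt
      have hge : ¬ (k - 1 - y.val < k - 1 - x.val) := by
        intro hlt
        exact hall _ hlt hfy
      refine ⟨hE, y, ?_, hfy⟩
      exact Fin.le_def.mpr (by omega)
  have hmain : ∀ x : Fin k,
      q (f x) (sStar (f x)) +
        ∑ j ∈ univ.filter (fun j => E (f x) j ∧ ∃ y : Fin k, y ≤ x ∧ f y = j),
          Q (f x) j (sStar (f x)) (sStar j) ≤ α * p s (f x) := by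
    intro x
    have hx := x.isLt
    have hm : k - 1 - x.val < k := by omega
    rw [hfilter x, hfval]
    exact hbound _ hm
  refine ⟨⟨f, hfinj, himg, hmain⟩, ?_⟩
  -- Second part: sum the inequalities and double-count edges.
  have hsumK : ∀ (F : N → ℝ), ∑ i ∈ K, F i = ∑ x : Fin k, F (f x) := by
    intro F
    rw [← himg, sum_image (fun a _ b _ h => hfinj h)]
  -- Reindex the inner sums through f.
  have hKx : ∀ x : Fin k, univ.filter (fun j => E (f x) j ∧ j ∈ K)
      = image f (univ.filter (fun y => E (f x) (f y))) := by
    intro x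
    ext j
    simp only [mem_filter, mem_univ, true_and, mem_image]
    constructor
    · rintro ⟨hE, hjK⟩
      obtain ⟨y, hfy⟩ := (hmemK_iff j).mp hjK
      exact ⟨y, by rw [hfy]; exact hE, hfy⟩
    · rintro ⟨y, hEy, hfy⟩
      rw [← hfy]
      exact ⟨hEy, (hmemK_iff (f y)).mpr ⟨y, rfl⟩⟩
  have hTx : ∀ x : Fin k,
      univ.filter (fun j => E (f x) j ∧ ∃ y : Fin k, y ≤ x ∧ f y = j)
        = image f (univ.filter (fun y => E (f x) (f y) ∧ y ≤ x)) := by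
    intro x
    ext j
    simp only [mem_filter, mem_univ, true_and, mem_image]
    constructor
    · rintro ⟨hE, y, hyx, hfy⟩
      exact ⟨y, ⟨by rw [hfy]; exact hE, hyx⟩, hfy⟩
    · rintro ⟨y, ⟨hE, hyx⟩, hfy⟩
      rw [← hfy]
      exact ⟨hE, y, hyx, rfl⟩
  have hinner1 : ∀ x : Fin k,
      ∑ j ∈ univ.filter (fun j => E (f x) j ∧ j ∈ K), Q (f x) j (sStar (f x)) (sStar j)
        = ∑ y : Fin k, if E (f x) (f y)
            then Q (f x) (f y) (sStar (f x)) (sStar (f y)) else 0 := by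
    intro x
    rw [hKx x, sum_image (fun a _ b _ h => hfinj h), sum_filter]
  have hinner2 : ∀ x : Fin k,
      ∑ j ∈ univ.filter (fun j => E (f x) j ∧ ∃ y : Fin k, y ≤ x ∧ f y = j),
          Q (f x) j (sStar (f x)) (sStar j)
        = ∑ y : Fin k, if E (f x) (f y) ∧ y ≤ x
            then Q (f x) (f y) (sStar (f x)) (sStar (f y)) else 0 := by
    intro x
    rw [hTx x, sum_image (fun a _ b _ h => hfinj h), sum_filter]
  -- Double counting.
  have hD : ∀ x : Fin k,
      (∑ y : Fin k, if E (f x) (f y) then Q (f x) (f y) (sStar (f x)) (sStar (f y)) else 0)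
        = (∑ y : Fin k, if E (f x) (f y) ∧ y < x
              then Q (f x) (f y) (sStar (f x)) (sStar (f y)) else 0)
          + (∑ y : Fin k, if E (f x) (f y) ∧ x < y
              then Q (f x) (f y) (sStar (f x)) (sStar (f y)) else 0) := by
    intro x
    rw [← sum_add_distrib]
    refine sum_congr rfl fun y _ => ?_
    by_cases he : E (f x) (f y)
    · rcases lt_trichotomy y x with h | h | h
      · rw [if_pos he, if_pos ⟨he, h⟩, if_neg (fun hc => absurd hc.2 (not_lt.mpr h.le)), add_zero]
      · subst h; exact absurd he (hE_irrefl (f y))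
      · rw [if_pos he, if_neg (fun hc => absurd hc.2 (not_lt.mpr h.le)), if_pos ⟨he, h⟩, zero_add]
    · rw [if_neg he, if_neg (fun hc => he hc.1), if_neg (fun hc => he hc.1), add_zero]
  have hswap :
      (∑ x : Fin k, ∑ y : Fin k, if E (f x) (f y) ∧ x < y
          then Q (f x) (f y) (sStar (f x)) (sStar (f y)) else 0)
        = (∑ x : Fin k, ∑ y : Fin k, if E (f x) (f y) ∧ y < x
            then Q (f x) (f y) (sStar (f x)) (sStar (f y)) else 0) := by
    rw [Finset.sum_comm]
    refine sum_congr rfl fun y _ => sum_congr rfl fun x _ => ?_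
    by_cases h : E (f x) (f y) ∧ x < y
    · rw [if_pos h, if_pos ⟨(hE_symm _ _).mp h.1, h.2⟩, hQ_symm]
    · rw [if_neg h, if_neg (fun hc => h ⟨(hE_symm _ _).mp hc.1, hc.2⟩)]
  have hle_lt : ∀ x y : Fin k,
      (if E (f x) (f y) ∧ y ≤ x then Q (f x) (f y) (sStar (f x)) (sStar (f y)) else 0)
        = (if E (f x) (f y) ∧ y < x then Q (f x) (f y) (sStar (f x)) (sStar (f y)) else 0) := by
    intro x y
    by_cases hxy : y = x
    · subst hxy
      rw [if_neg (fun hc => hE_irrefl _ hc.1), if_neg (fun hc => hE_irrefl _ hc.1)]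
    · by_cases h : E (f x) (f y) ∧ y ≤ x
      · rw [if_pos h, if_pos ⟨h.1, lt_of_le_of_ne h.2 hxy⟩]
      · rw [if_neg h, if_neg (fun hc => h ⟨hc.1, hc.2.le⟩)]
  have hhalf :
      ∑ x : Fin k, (1 / 2 : ℝ) * (∑ y : Fin k, if E (f x) (f y)
          then Q (f x) (f y) (sStar (f x)) (sStar (f y)) else 0)
        = ∑ x : Fin k, ∑ y : Fin k, if E (f x) (f y) ∧ y ≤ x
            then Q (f x) (f y) (sStar (f x)) (sStar (f y)) else 0 := by
    have h1 : (∑ x : Fin k, ∑ y : Fin k, if E (f x) (f y)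
          then Q (f x) (f y) (sStar (f x)) (sStar (f y)) else 0)
        = 2 * ∑ x : Fin k, ∑ y : Fin k, if E (f x) (f y) ∧ y < x
            then Q (f x) (f y) (sStar (f x)) (sStar (f y)) else 0 := by
      rw [sum_congr rfl (fun x _ => hD x), sum_add_distrib, hswap]
      ring
    rw [← mul_sum, h1]
    rw [sum_congr rfl (fun x _ => sum_congr rfl (fun y _ => hle_lt x y))]
    ring
  -- Put everything together.
  calc ∑ i ∈ K, (q i (sStar i) +
          (1 / 2) * ∑ j ∈ univ.filter (fun j => E i j ∧ j ∈ K), Q i j (sStar i) (sStar j))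
      = ∑ x : Fin k, (q (f x) (sStar (f x)) +
          (1 / 2) * ∑ j ∈ univ.filter (fun j => E (f x) j ∧ j ∈ K),
            Q (f x) j (sStar (f x)) (sStar j)) := hsumK _
    _ = ∑ x : Fin k, q (f x) (sStar (f x)) +
          ∑ x : Fin k, (1 / 2 : ℝ) * (∑ y : Fin k, if E (f x) (f y)
            then Q (f x) (f y) (sStar (f x)) (sStar (f y)) else 0) := by
          rw [← sum_add_distrib]
          exact sum_congr rfl fun x _ => by rw [hinner1 x]
    _ = ∑ x : Fin k, q (f x) (sStar (f x)) +
          ∑ x : Fin k, ∑ y : Fin k, if E (f x) (f y) ∧ y ≤ x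
            then Q (f x) (f y) (sStar (f x)) (sStar (f y)) else 0 := by rw [hhalf]
    _ = ∑ x : Fin k, (q (f x) (sStar (f x)) +
          ∑ j ∈ univ.filter (fun j => E (f x) j ∧ ∃ y : Fin k, y ≤ x ∧ f y = j),
            Q (f x) j (sStar (f x)) (sStar j)) := by
          rw [← sum_add_distrib]
          exact sum_congr rfl fun x _ => by rw [hinner2 x]
    _ ≤ ∑ x : Fin k, α * p s (f x) := sum_le_sum fun x _ => hmain x
    _ = α * ∑ x : Fin k, p s (f x) := by rw [mul_sum]
    _ = α * ∑ i ∈ K, p s i := by rw [hsumK (fun i => p s i)]
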